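/- Let n ≥ 1, J ≥ 0 be integers with K = n − J ≥ 1. Then ∫₀^{π/2} ∫₀^{π/2} √(1 − sin²a sin²b) (sin a)^n (cos a)^{J−1} (cos b)^{K−1} (sin b)^{J−1} da db = [Γ((n+1)/2) Γ(J/2)² Γ(K/2) / (4 Γ((n+J+1)/2) Γ(n/2))] · ₃F₂((n+1)/2, J/2, −1/2; (n+J+1)/2, n/2; 1). -/

import Mathlib

open Real MeasureTheory

/-- Pochhammer (rising factorial) symbol on the reals. -/
noncomputable def poch (x : ℝ) (k : ℕ) : ℝ := (ascPochhammer ℝ k).eval x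

lemma poch_zero (x : ℝ) : poch x 0 = 1 := by simp [poch]

lemma poch_succ (x : ℝ) (k : ℕ) : poch x (k+1) = poch x k * (x + k) := by
  simp [poch, ascPochhammer_succ_right, Polynomial.eval_mul]

lemma poch_pos {x : ℝ} (hx : 0 < x) (k : ℕ) : 0 < poch x k := by
  induction k with
  | zero => simp [poch_zero]
  | succ k ih =>
    rw [poch_succ]
    exact mul_pos ih (by positivity)

/-- coefficients of the binomial series for `√(1-x)` -/
noncomputable def sqc (l : ℕ) : ℝ := poch (-(1/2)) l / l.factorial

lemma sqc_zero : sqc 0 = 1 := by simp [sqc, poch_zero]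

lemma sqc_one : sqc 1 = -(1/2) := by
  simp [sqc, poch_succ, poch_zero]

lemma sqc_succ (l : ℕ) : ((l:ℝ)+1) * sqc (l+1) = ((l:ℝ) - 1/2) * sqc l := by
  have h : (l.factorial : ℝ) ≠ 0 := Nat.cast_ne_zero.2 l.factorial_ne_zero
  rw [sqc, sqc, poch_succ, Nat.factorial_succ]
  push_cast
  field_simp
  ring

lemma sqc_nonpos {l : ℕ} (hl : 1 ≤ l) : sqc l ≤ 0 := by
  induction l with
  | zero => omega
  | succ l ih =>
    rcases Nat.eq_zero_or_pos l with h0 | h1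
    · subst h0; rw [show (0:ℕ)+1 = 1 from rfl, sqc_one]; norm_num
    · have h := sqc_succ l
      have h1' : (1:ℝ) ≤ l := by exact_mod_cast h1
      have := ih h1
      nlinarith

lemma sqc_sq_le (l : ℕ) (hl : 1 ≤ l) : sqc l ^ 2 ≤ 1 / (4 * (l:ℝ)^2 * (2*(l:ℝ) - 1)) := by
  induction l with
  | zero => omega
  | succ l ih =>
    rcases Nat.eq_zero_or_pos l with h0 | h1
    · subst h0; rw [show (0:ℕ)+1 = 1 from rfl, sqc_one]; norm_num
    · have h1' : (1:ℝ) ≤ l := by exact_mod_cast h1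
      have hrec := sqc_succ l
      have hih := ih h1
      have hl0 : (0:ℝ) < l := by linarith
      -- ((l+1) * sqc (l+1))^2 = (l-1/2)^2 * sqc l ^2 ≤ (l-1/2)^2/(4l²(2l-1))
      have h2 : ((l:ℝ)+1)^2 * sqc (l+1) ^2 = ((l:ℝ)-1/2)^2 * sqc l ^2 := by
        have := congrArg (fun x => x^2) hrec
        simpa [mul_pow] using this
      have hkey : ((l:ℝ)-1/2)^2 * sqc l ^2 ≤ ((l:ℝ)+1)^2 * (1 / (4 * ((l:ℝ)+1)^2 * (2*((l:ℝ)+1) - 1))) := by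
        have hb : ((l:ℝ)-1/2)^2 * sqc l ^2 ≤ ((l:ℝ)-1/2)^2 * (1 / (4 * (l:ℝ)^2 * (2*(l:ℝ) - 1))) := by
          apply mul_le_mul_of_nonneg_left hih (by positivity)
        refine hb.trans ?_
        rw [mul_one_div, mul_one_div, div_le_div_iff₀ (by nlinarith) (by nlinarith)]
        nlinarith [sq_nonneg ((l:ℝ) - 1/2), sq_nonneg (l:ℝ)]
      have hpos : (0:ℝ) < ((l:ℝ)+1)^2 := by positivity
      have h3 := (mul_le_mul_iff_right₀ hpos).1 (h2.trans_le hkey)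
      push_cast
      exact h3

lemma abs_sqc_le (l : ℕ) (hl : 1 ≤ l) : |sqc l| ≤ 1 / (l:ℝ) ^ (3/2 : ℝ) := by
  have h1' : (1:ℝ) ≤ l := by exact_mod_cast hl
  have h := sqc_sq_le l hl
  have h2 : sqc l ^ 2 ≤ 1 / (l:ℝ)^3 := by
    refine h.trans ?_
    rw [div_le_div_iff₀ (by nlinarith) (by nlinarith)]
    nlinarith
  have h3 := Real.sqrt_le_sqrt h2
  rw [Real.sqrt_sq_eq_abs] at h3
  refine h3.trans_eq ?_
  have hc : (0:ℝ) ≤ (l:ℝ) := Nat.cast_nonneg l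
  have hsq : Real.sqrt ((l:ℝ)^3) = (l:ℝ)^(3/2:ℝ) := by
    rw [Real.sqrt_eq_rpow, ← Real.rpow_natCast (l:ℝ) 3, ← Real.rpow_mul hc]
    norm_num
  rw [one_div, Real.sqrt_inv, hsq, one_div]

lemma summable_abs_sqc : Summable (fun l => |sqc l|) := by
  rw [← summable_nat_add_iff 1]
  apply Summable.of_nonneg_of_le (fun l => abs_nonneg _)
    (fun l => abs_sqc_le (l+1) (by omega))
  exact (summable_nat_add_iff 1).2 (Real.summable_one_div_nat_rpow.2 (by norm_num))

lemma summable_norm_sqc_mul_pow {x : ℝ} (h0 : 0 ≤ x) (h1 : x < 1) :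
    Summable (fun l => ‖sqc l * x ^ l‖) := by
  have key : Summable (fun l => |sqc l| * x ^ l) := by
    apply summable_of_ratio_norm_eventually_le h1
    filter_upwards with l
    have e := congrArg abs (sqc_succ l)
    rw [abs_mul, abs_mul, abs_of_nonneg (by positivity : (0:ℝ) ≤ (l:ℝ)+1)] at e
    have hb : |(l:ℝ) - 1/2| ≤ (l:ℝ) + 1 := by
      rw [abs_le]
      constructor <;> [linarith [Nat.cast_nonneg (α := ℝ) l]; linarith]
    have hle : |sqc (l+1)| ≤ |sqc l| := by
      nlinarith [abs_nonneg (sqc l), abs_nonneg (sqc (l+1)), Nat.cast_nonneg (α := ℝ) l]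
    have hx : (0:ℝ) ≤ x ^ l := by positivity
    rw [Real.norm_of_nonneg (by positivity), Real.norm_of_nonneg (by positivity)]
    calc |sqc (l+1)| * x ^ (l+1) = (|sqc (l+1)| * x^l) * x := by ring
      _ ≤ (|sqc l| * x^l) * x := by
          apply mul_le_mul_of_nonneg_right (mul_le_mul_of_nonneg_right hle hx) h0
      _ = x * (|sqc l| * x^l) := by ring
  refine key.congr fun l => ?_
  rw [norm_mul, norm_pow, Real.norm_of_nonneg h0, Real.norm_eq_abs]

/-- partial convolution sums of `sqc` -/
noncomputable def Ssq (n : ℕ) : ℝ := ∑ i ∈ Finset.range (n+1), sqc i * sqc (n - i)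

lemma Ssq_zero : Ssq 0 = 1 := by simp [Ssq, sqc_zero]

lemma Ssq_one : Ssq 1 = -1 := by
  rw [Ssq]
  rw [Finset.sum_range_succ, Finset.sum_range_one]
  simp [sqc_zero, sqc_one]
  norm_num

private noncomputable def Tsq (m : ℕ) : ℝ :=
  ∑ i ∈ Finset.range (m+1), (i:ℝ) * (sqc i * sqc (m - i))

private lemma refl_sum (g : ℕ → ℝ) (m : ℕ) :
    ∑ i ∈ Finset.range (m+1), g i = ∑ i ∈ Finset.range (m+1), g (m - i) := by
  have := Finset.sum_range_reflect g (m+1)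
  simpa using this.symm

private lemma two_Tsq (m : ℕ) : 2 * Tsq m = (m:ℝ) * Ssq m := by
  have e1 := refl_sum (fun i => (i:ℝ) * (sqc i * sqc (m - i))) m
  have e2 : ∑ i ∈ Finset.range (m+1), ((m - i : ℕ):ℝ) * (sqc (m-i) * sqc (m - (m - i)))
      = ∑ i ∈ Finset.range (m+1), ((m:ℝ) - (i:ℝ)) * (sqc (m-i) * sqc i) := by
    refine Finset.sum_congr rfl fun i hi => ?_
    have hi' : i ≤ m := by simpa [Nat.lt_succ_iff] using hi
    rw [Nat.sub_sub_self hi', Nat.cast_sub hi']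
  have e3 : Tsq m = ∑ i ∈ Finset.range (m+1), ((m:ℝ) - (i:ℝ)) * (sqc (m-i) * sqc i) :=
    e1.trans e2
  calc 2 * Tsq m = Tsq m + Tsq m := two_mul _
    _ = Tsq m + ∑ i ∈ Finset.range (m+1), ((m:ℝ) - (i:ℝ)) * (sqc (m-i) * sqc i) := by
        rw [← e3]
    _ = ∑ i ∈ Finset.range (m+1),
        ((i:ℝ) * (sqc i * sqc (m-i)) + ((m:ℝ) - (i:ℝ)) * (sqc (m-i) * sqc i)) := by
        rw [Tsq, ← Finset.sum_add_distrib]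
    _ = ∑ i ∈ Finset.range (m+1), (m:ℝ) * (sqc i * sqc (m-i)) := by
        refine Finset.sum_congr rfl fun i _ => by ring
    _ = (m:ℝ) * Ssq m := by rw [Ssq, Finset.mul_sum]

private lemma Tsq_succ (m : ℕ) : Tsq (m+1) = Tsq m - (1/2) * Ssq m := by
  have h0 : Tsq (m+1) = ∑ i ∈ Finset.range (m+1),
      ((i:ℝ)+1) * (sqc (i+1) * sqc (m - i)) := by
    rw [Tsq, Finset.sum_range_succ']
    simp
  have h1 : ∀ i : ℕ, ((i:ℝ)+1) * (sqc (i+1) * sqc (m - i))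
      = ((i:ℝ) - 1/2) * sqc i * sqc (m - i) := by
    intro i
    rw [← mul_assoc, sqc_succ i]
  rw [h0]
  calc ∑ i ∈ Finset.range (m+1), ((i:ℝ)+1) * (sqc (i+1) * sqc (m - i))
      = ∑ i ∈ Finset.range (m+1), (((i:ℝ)) * (sqc i * sqc (m-i)) - (1/2) * (sqc i * sqc (m-i))) := by
        refine Finset.sum_congr rfl fun i _ => by rw [h1 i]; ring
    _ = Tsq m - (1/2) * Ssq m := by
        rw [Finset.sum_sub_distrib, ← Finset.mul_sum, Tsq, Ssq]

lemma Ssq_rec (n : ℕ) : ((n:ℝ)+1) * Ssq (n+1) = ((n:ℝ)-1) * Ssq n := by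
  have h1 := two_Tsq (n+1)
  have h2 := Tsq_succ n
  have h3 := two_Tsq n
  push_cast at h1
  nlinarith [h1, h2, h3]

lemma Ssq_eq_zero (n : ℕ) : Ssq (n+2) = 0 := by
  induction n with
  | zero =>
    have := Ssq_rec 1
    rw [Ssq_one] at this
    norm_num at this
    linarith
  | succ n ih =>
    have := Ssq_rec (n+2)
    rw [ih] at this
    have hne : ((n:ℝ)+2)+1 ≠ 0 := by positivity
    push_cast at this ⊢
    nlinarith [this]

noncomputable def Fsq (x : ℝ) : ℝ := ∑' l, sqc l * x ^ l

lemma Fsq_sq {x : ℝ} (h0 : 0 ≤ x) (h1 : x < 1) : Fsq x ^ 2 = 1 - x := by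
  have hs := summable_norm_sqc_mul_pow h0 h1
  have hC := tsum_mul_tsum_eq_tsum_sum_antidiagonal_of_summable_norm hs hs
  rw [sq, Fsq, hC]
  have key : ∀ n, ∑ kl ∈ Finset.HasAntidiagonal.antidiagonal n,
      (sqc kl.1 * x^kl.1) * (sqc kl.2 * x^kl.2) = Ssq n * x^n := by
    intro n
    rw [Finset.Nat.sum_antidiagonal_eq_sum_range_succ_mk, Ssq, Finset.sum_mul]
    refine Finset.sum_congr rfl fun i hi => ?_
    have hi' : i ≤ n := by simpa [Nat.lt_succ_iff] using hi
    have hx : x^i * x^(n-i) = x^n := by rw [← pow_add, Nat.add_sub_cancel' hi']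
    calc (sqc i * x^i) * (sqc (n-i) * x^(n-i))
        = sqc i * sqc (n-i) * (x^i * x^(n-i)) := by ring
      _ = sqc i * sqc (n-i) * x^n := by rw [hx]
  rw [tsum_congr key]
  rw [tsum_eq_sum (s := ({0, 1} : Finset ℕ)) (by
    intro b hb
    have hb2 : 2 ≤ b := by
      simp only [Finset.mem_insert, Finset.mem_singleton] at hb
      omega
    obtain ⟨m, rfl⟩ : ∃ m, b = m + 2 := ⟨b - 2, by omega⟩
    rw [Ssq_eq_zero]
    ring)]
  rw [Finset.sum_insert (by norm_num), Finset.sum_singleton, Ssq_zero, Ssq_one]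
  ring

lemma Fsq_eq_sqrt {x : ℝ} (h0 : 0 ≤ x) (h1 : x < 1) : Fsq x = Real.sqrt (1 - x) := by
  have habs : ∀ y, 0 ≤ y → y < 1 → |Fsq y| = Real.sqrt (1-y) := fun y hy0 hy1 => by
    rw [← Real.sqrt_sq_eq_abs, Fsq_sq hy0 hy1]
  rcases (abs_eq (Real.sqrt_nonneg (1-x))).1 (habs x h0 h1) with h | h
  · exact h
  · exfalso
    set y := (x+1)/2 with hy
    have hy0 : (0:ℝ) ≤ y := by rw [hy]; linarith
    have hxy : x ≤ y := by rw [hy]; linarith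
    have hxy' : x < y := by rw [hy]; linarith
    have hy1 : y < 1 := by rw [hy]; linarith
    have hmono : Fsq y ≤ Fsq x := by
      apply Summable.tsum_le_tsum _ ((summable_norm_sqc_mul_pow hy0 hy1).of_norm)
        ((summable_norm_sqc_mul_pow h0 h1).of_norm)
      intro l
      rcases Nat.eq_zero_or_pos l with h0' | h1'
      · subst h0'; simp
      · exact mul_le_mul_of_nonpos_left (pow_le_pow_left₀ h0 hxy l) (sqc_nonpos h1')
    have hx' : (0:ℝ) < Real.sqrt (1-x) := Real.sqrt_pos.2 (by linarith)
    have hFy_neg : Fsq y < 0 := lt_of_le_of_lt hmono (by rw [h]; linarith)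
    have hFy : Fsq y = -Real.sqrt (1-y) := by
      rcases (abs_eq (Real.sqrt_nonneg (1-y))).1 (habs y hy0 hy1) with h' | h'
      · exfalso; rw [h'] at hFy_neg; linarith [Real.sqrt_nonneg (1-y)]
      · exact h'
    have hlt : Real.sqrt (1-y) < Real.sqrt (1-x) :=
      Real.sqrt_lt_sqrt (by linarith) (by linarith)
    rw [hFy, h] at hmono
    linarith

lemma hasSum_sqrt_one_sub {x : ℝ} (h0 : 0 ≤ x) (h1 : x < 1) :
    HasSum (fun l => sqc l * x ^ l) (Real.sqrt (1 - x)) := by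
  have := ((summable_norm_sqc_mul_pow h0 h1).of_norm).hasSum
  rwa [show (∑' l, sqc l * x ^ l) = Fsq x from rfl, Fsq_eq_sqrt h0 h1] at this

section Beta

lemma realBeta (s t : ℝ) (hs : 0 < s) (ht : 0 < t) :
    IntegrableOn (fun x : ℝ => x ^ (s-1) * (1-x) ^ (t-1)) (Set.Ioo 0 1) ∧
    ∫ x in Set.Ioo (0:ℝ) 1, x ^ (s-1) * (1-x) ^ (t-1)
      = Real.Gamma s * Real.Gamma t / Real.Gamma (s+t) := by
  set fC : ℝ → ℂ := fun x => (x:ℂ) ^ ((s:ℂ) - 1) * (1 - (x:ℂ)) ^ ((t:ℂ) - 1) with hfC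
  have hs' : 0 < Complex.re (s:ℂ) := by simpa using hs
  have ht' : 0 < Complex.re (t:ℂ) := by simpa using ht
  have hconv : IntervalIntegrable fC volume 0 1 := Complex.betaIntegral_convergent hs' ht'
  have hIoo : IntegrableOn fC (Set.Ioo 0 1) := by
    rw [intervalIntegrable_iff_integrableOn_Ioc_of_le zero_le_one] at hconv
    exact hconv.mono_set Set.Ioo_subset_Ioc_self
  have hEq : ∀ x ∈ Set.Ioo (0:ℝ) 1, fC x = ((x ^ (s-1) * (1-x) ^ (t-1) : ℝ) : ℂ) := by
    intro x hx
    have hx0 : (0:ℝ) ≤ x := hx.1.le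
    have hx1 : (0:ℝ) ≤ 1 - x := by linarith [hx.2]
    rw [hfC]
    push_cast
    rw [Complex.ofReal_cpow hx0, Complex.ofReal_cpow hx1]
    push_cast
    ring
  have hIntR : IntegrableOn (fun x : ℝ => x ^ (s-1) * (1-x) ^ (t-1)) (Set.Ioo 0 1) := by
    have h1 : IntegrableOn (fun x : ℝ => ((x ^ (s-1) * (1-x) ^ (t-1) : ℝ) : ℂ)) (Set.Ioo 0 1) :=
      hIoo.congr_fun hEq measurableSet_Ioo
    have h2 : IntegrableOn
        (fun x : ℝ => RCLike.re ((x ^ (s-1) * (1-x) ^ (t-1) : ℝ) : ℂ)) (Set.Ioo 0 1) := h1.re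
    refine h2.congr_fun (fun x _ => ?_) measurableSet_Ioo
    simp
  refine ⟨hIntR, ?_⟩
  have hbeta : Complex.betaIntegral (s:ℂ) (t:ℂ)
      = ((∫ x in Set.Ioo (0:ℝ) 1, x ^ (s-1) * (1-x) ^ (t-1) : ℝ) : ℂ) := by
    rw [Complex.betaIntegral, intervalIntegral.integral_of_le zero_le_one,
      MeasureTheory.integral_Ioc_eq_integral_Ioo,
      MeasureTheory.setIntegral_congr_fun measurableSet_Ioo hEq]
    exact integral_ofReal
  have hG := Complex.Gamma_mul_Gamma_eq_betaIntegral hs' ht'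
  rw [hbeta] at hG
  have hGs : Complex.Gamma (s:ℂ) = ((Real.Gamma s : ℝ) : ℂ) := Complex.Gamma_ofReal s
  have hGt : Complex.Gamma (t:ℂ) = ((Real.Gamma t : ℝ) : ℂ) := Complex.Gamma_ofReal t
  have hGst : Complex.Gamma ((s:ℂ) + (t:ℂ)) = ((Real.Gamma (s+t) : ℝ) : ℂ) := by
    rw [show (s:ℂ) + (t:ℂ) = ((s+t : ℝ) : ℂ) by push_cast; ring, Complex.Gamma_ofReal]
  rw [hGs, hGt, hGst] at hG
  have hreal : Real.Gamma s * Real.Gamma t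
      = Real.Gamma (s+t) * ∫ x in Set.Ioo (0:ℝ) 1, x ^ (s-1) * (1-x) ^ (t-1) := by
    exact_mod_cast hG
  have hne : Real.Gamma (s+t) ≠ 0 := (Real.Gamma_pos_of_pos (by linarith)).ne'
  field_simp
  linarith [hreal]

lemma trigBeta (p q : ℝ) (hp : -1 < p) (hq : -1 < q) :
    IntegrableOn (fun θ => Real.sin θ ^ p * Real.cos θ ^ q) (Set.Ioo 0 (π/2)) ∧
    ∫ θ in Set.Ioo (0:ℝ) (π/2), Real.sin θ ^ p * Real.cos θ ^ q
      = Real.Gamma ((p+1)/2) * Real.Gamma ((q+1)/2)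
        / (2 * Real.Gamma ((p+1)/2 + (q+1)/2)) := by
  have hs : 0 < (p+1)/2 := by linarith
  have ht : 0 < (q+1)/2 := by linarith
  obtain ⟨hInt01, hVal01⟩ := realBeta ((p+1)/2) ((q+1)/2) hs ht
  set f : ℝ → ℝ := fun θ => Real.sin θ ^ 2 with hf
  set f' : ℝ → ℝ := fun θ => 2 * Real.sin θ * Real.cos θ with hf'
  set g : ℝ → ℝ := fun x => x ^ ((p+1)/2 - 1) * (1-x) ^ ((q+1)/2 - 1) with hg
  have hmem : ∀ θ ∈ Set.Ioo (0:ℝ) (π/2),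
      0 < Real.sin θ ∧ Real.sin θ < 1 ∧ 0 < Real.cos θ := by
    intro θ hθ
    refine ⟨Real.sin_pos_of_pos_of_lt_pi hθ.1 (by linarith [hθ.2, Real.pi_pos]), ?_, ?_⟩
    · calc Real.sin θ < Real.sin (π/2) := by
            apply Real.strictMonoOn_sin ⟨by linarith [hθ.1, Real.pi_pos], hθ.2.le⟩
              ⟨by linarith [Real.pi_pos], le_refl _⟩ hθ.2
        _ = 1 := Real.sin_pi_div_two
    · exact Real.cos_pos_of_mem_Ioo ⟨by linarith [hθ.1, Real.pi_pos], hθ.2⟩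
  have hder : ∀ θ ∈ Set.Ioo (0:ℝ) (π/2),
      HasDerivWithinAt f (f' θ) (Set.Ioo (0:ℝ) (π/2)) θ := by
    intro θ _
    have h1 : HasDerivAt f (2 * Real.sin θ ^ 1 * Real.cos θ) θ :=
      (Real.hasDerivAt_sin θ).pow 2
    have h2 : (2:ℝ) * Real.sin θ ^ 1 * Real.cos θ = f' θ := by rw [hf']; ring
    exact (h2 ▸ h1).hasDerivWithinAt
  have hinj : Set.InjOn f (Set.Ioo 0 (π/2)) := by
    intro a ha b hb hab
    have h1 := hmem a ha
    have h2 := hmem b hb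
    have hab' : Real.sin a ^ 2 = Real.sin b ^ 2 := hab
    have hsin : Real.sin a = Real.sin b := by
      nlinarith [h1.1, h2.1, hab']
    exact Real.injOn_sin ⟨by linarith [ha.1, Real.pi_pos], by linarith [ha.2]⟩
      ⟨by linarith [hb.1, Real.pi_pos], by linarith [hb.2]⟩ hsin
  have him : f '' Set.Ioo 0 (π/2) = Set.Ioo 0 1 := by
    ext x
    constructor
    · rintro ⟨θ, hθ, rfl⟩
      obtain ⟨h1, h2, _⟩ := hmem θ hθ
      simp only [hf, Set.mem_Ioo]
      exact ⟨by positivity, by nlinarith⟩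
    · rintro ⟨hx0, hx1⟩
      refine ⟨Real.arcsin (Real.sqrt x), ⟨?_, ?_⟩, ?_⟩
      · exact Real.arcsin_pos.2 (Real.sqrt_pos.2 hx0)
      · apply Real.arcsin_lt_pi_div_two.2
        rw [show (1:ℝ) = Real.sqrt 1 by simp]
        exact Real.sqrt_lt_sqrt hx0.le hx1
      · show Real.sin (Real.arcsin (Real.sqrt x)) ^ 2 = x
        have h1 : Real.sin (Real.arcsin (Real.sqrt x)) = Real.sqrt x :=
          Real.sin_arcsin (by linarith [Real.sqrt_nonneg x]) (by
            rw [show (1:ℝ) = Real.sqrt 1 by simp]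
            exact Real.sqrt_le_sqrt hx1.le)
        simp only [h1]
        exact Real.sq_sqrt hx0.le
  have hchange := integral_image_eq_integral_abs_deriv_smul measurableSet_Ioo hder hinj g
  rw [him] at hchange
  have hcong : ∀ θ ∈ Set.Ioo (0:ℝ) (π/2),
      |f' θ| • g (f θ) = 2 * (Real.sin θ ^ p * Real.cos θ ^ q) := by
    intro θ hθ
    obtain ⟨h1, h2, h3⟩ := hmem θ hθ
    have e1 : (Real.sin θ ^ 2) ^ ((p+1)/2 - 1) = Real.sin θ ^ (p - 1) := by
      rw [← Real.rpow_natCast (Real.sin θ) 2, ← Real.rpow_mul h1.le]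
      congr 1
      ring
    have e2 : (1 - Real.sin θ ^ 2) = Real.cos θ ^ 2 := by
      nlinarith [Real.sin_sq_add_cos_sq θ]
    have e3 : (Real.cos θ ^ 2) ^ ((q+1)/2 - 1) = Real.cos θ ^ (q - 1) := by
      rw [← Real.rpow_natCast (Real.cos θ) 2, ← Real.rpow_mul h3.le]
      congr 1
      ring
    have e4 : |f' θ| = 2 * Real.sin θ * Real.cos θ :=
      abs_of_pos (mul_pos (mul_pos two_pos h1) h3)
    rw [smul_eq_mul, e4, hg, hf]
    simp only [e2, e1, e3]
    rw [show Real.sin θ ^ p = Real.sin θ ^ (p - 1 + 1) by norm_num,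
      show Real.cos θ ^ q = Real.cos θ ^ (q - 1 + 1) by norm_num,
      Real.rpow_add_one h1.ne', Real.rpow_add_one h3.ne']
    ring
  have hval : ∫ θ in Set.Ioo (0:ℝ) (π/2), 2 * (Real.sin θ ^ p * Real.cos θ ^ q)
      = Real.Gamma ((p+1)/2) * Real.Gamma ((q+1)/2) / Real.Gamma ((p+1)/2 + (q+1)/2) := by
    rw [← MeasureTheory.setIntegral_congr_fun measurableSet_Ioo hcong, ← hchange, hVal01]
  have hInt2 : IntegrableOn (fun θ => 2 * (Real.sin θ ^ p * Real.cos θ ^ q))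
      (Set.Ioo 0 (π/2)) := by
    have := (integrableOn_image_iff_integrableOn_abs_deriv_smul measurableSet_Ioo
      hder hinj g).1 (him ▸ hInt01)
    exact this.congr_fun hcong measurableSet_Ioo
  have hInt : IntegrableOn (fun θ => Real.sin θ ^ p * Real.cos θ ^ q)
      (Set.Ioo 0 (π/2)) := by
    have h12 : IntegrableOn (fun θ => (1/2 : ℝ) * (2 * (Real.sin θ ^ p * Real.cos θ ^ q)))
        (Set.Ioo 0 (π/2)) := hInt2.const_mul (1/2 : ℝ)
    refine h12.congr_fun (fun θ _ => by ring) measurableSet_Ioo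
  refine ⟨hInt, ?_⟩
  rw [MeasureTheory.integral_const_mul] at hval
  have hGpos : (0:ℝ) < Real.Gamma ((p+1)/2 + (q+1)/2) := Real.Gamma_pos_of_pos (by linarith)
  have hGne := hGpos.ne'
  rw [eq_div_iff (mul_ne_zero two_ne_zero hGne)]
  rw [eq_div_iff hGne] at hval
  linear_combination hval

end Beta

lemma Gamma_nat_add {x : ℝ} (hx : 0 < x) (l : ℕ) :
    Real.Gamma ((l:ℝ) + x) = Real.Gamma x * poch x l := by
  induction l with
  | zero => simp [poch_zero]
  | succ l ih =>
    have h1 : ((l+1:ℕ):ℝ) + x = ((l:ℝ) + x) + 1 := by push_cast; ring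
    have h2 : ((l:ℝ) + x) ≠ 0 := by positivity
    rw [h1, Real.Gamma_add_one h2, ih, poch_succ]
    ring

lemma mem_trig {θ : ℝ} (hθ : θ ∈ Set.Ioo (0:ℝ) (π/2)) :
    0 < Real.sin θ ∧ Real.sin θ < 1 ∧ 0 < Real.cos θ := by
  refine ⟨Real.sin_pos_of_pos_of_lt_pi hθ.1 (by linarith [hθ.2, Real.pi_pos]), ?_, ?_⟩
  · calc Real.sin θ < Real.sin (π/2) := by
          apply Real.strictMonoOn_sin ⟨by linarith [hθ.1, Real.pi_pos], hθ.2.le⟩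
            ⟨by linarith [Real.pi_pos], le_refl _⟩ hθ.2
      _ = 1 := Real.sin_pi_div_two
  · exact Real.cos_pos_of_mem_Ioo ⟨by linarith [hθ.1, Real.pi_pos], hθ.2⟩

section Main

variable {n J K : ℕ}

lemma inner_step (hn : 1 ≤ n) (hJ1 : 1 ≤ J) (hK1 : 1 ≤ K)
    {a : ℝ} (ha : a ∈ Set.Ioo (0:ℝ) (π/2)) :
    ∫ b in Set.Ioo (0:ℝ) (π/2),
        Real.sqrt (1 - Real.sin a ^ 2 * Real.sin b ^ 2) *
          Real.sin a ^ (n : ℝ) * Real.cos a ^ ((J : ℝ) - 1) *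
          Real.cos b ^ ((K : ℝ) - 1) * Real.sin b ^ ((J : ℝ) - 1)
      = ∑' l : ℕ, (sqc l * (∫ b in Set.Ioo (0:ℝ) (π/2),
            Real.sin b ^ (2*(l:ℝ) + ((J:ℝ)-1)) * Real.cos b ^ ((K:ℝ)-1)))
          * (Real.sin a ^ (2*(l:ℝ) + (n:ℝ)) * Real.cos a ^ ((J:ℝ)-1)) := by
  obtain ⟨hsa, hsa1, hca⟩ := mem_trig ha
  have hJ1' : (1:ℝ) ≤ (J:ℝ) := by exact_mod_cast hJ1
  have hK1' : (1:ℝ) ≤ (K:ℝ) := by exact_mod_cast hK1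
  have hn' : (1:ℝ) ≤ (n:ℝ) := by exact_mod_cast hn
  set cst : ℝ := Real.sin a ^ (n:ℝ) * Real.cos a ^ ((J:ℝ)-1) with hcst
  have hcst_pos : 0 < cst := by
    apply mul_pos (Real.rpow_pos_of_pos hsa _) (Real.rpow_pos_of_pos hca _)
  set F : ℕ → ℝ → ℝ := fun l b =>
    (sqc l * Real.sin a ^ (2*(l:ℝ)) * cst) *
      (Real.sin b ^ (2*(l:ℝ) + ((J:ℝ)-1)) * Real.cos b ^ ((K:ℝ)-1)) with hF
  have hpb : ∀ l : ℕ, (-1:ℝ) < 2*(l:ℝ) + ((J:ℝ)-1) := by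
    intro l
    have := Nat.cast_nonneg (α := ℝ) l
    linarith
  have hqb : (-1:ℝ) < (K:ℝ)-1 := by linarith
  -- integrability of each term
  have hFint : ∀ l : ℕ, IntegrableOn (F l) (Set.Ioo (0:ℝ) (π/2)) := by
    intro l
    exact ((trigBeta _ _ (hpb l) hqb).1).const_mul _
  -- the b-integrals
  set Ib : ℕ → ℝ := fun l => ∫ b in Set.Ioo (0:ℝ) (π/2),
      Real.sin b ^ (2*(l:ℝ) + ((J:ℝ)-1)) * Real.cos b ^ ((K:ℝ)-1) with hIb
  have hIb_nonneg : ∀ l, 0 ≤ Ib l := by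
    intro l
    apply MeasureTheory.setIntegral_nonneg measurableSet_Ioo
    intro b hb
    obtain ⟨hsb, _, hcb⟩ := mem_trig hb
    positivity
  have hIb_mono : ∀ l, Ib l ≤ Ib 0 := by
    intro l
    apply MeasureTheory.setIntegral_mono_on (trigBeta _ _ (hpb l) hqb).1
      (trigBeta _ _ (hpb 0) hqb).1 measurableSet_Ioo
    intro b hb
    obtain ⟨hsb, hsb1, hcb⟩ := mem_trig hb
    apply mul_le_mul_of_nonneg_right _ (Real.rpow_nonneg hcb.le _)
    apply Real.rpow_le_rpow_of_exponent_ge hsb hsb1.le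
    have := Nat.cast_nonneg (α := ℝ) l
    push_cast
    linarith
  -- norm integrals
  have hnorm : ∀ l : ℕ, (∫ b in Set.Ioo (0:ℝ) (π/2), ‖F l b‖)
      = |sqc l| * Real.sin a ^ (2*(l:ℝ)) * cst * Ib l := by
    intro l
    have hcg : ∀ b ∈ Set.Ioo (0:ℝ) (π/2), ‖F l b‖
        = (|sqc l| * Real.sin a ^ (2*(l:ℝ)) * cst) *
          (Real.sin b ^ (2*(l:ℝ) + ((J:ℝ)-1)) * Real.cos b ^ ((K:ℝ)-1)) := by
      intro b hb
      obtain ⟨hsb, _, hcb⟩ := mem_trig hb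
      simp only [hF, Real.norm_eq_abs, abs_mul]
      rw [abs_of_pos (Real.rpow_pos_of_pos hsa _), abs_of_pos hcst_pos,
        abs_of_pos (Real.rpow_pos_of_pos hsb _), abs_of_pos (Real.rpow_pos_of_pos hcb _)]
    rw [MeasureTheory.setIntegral_congr_fun measurableSet_Ioo hcg,
      MeasureTheory.integral_const_mul]
  have hsum : Summable (fun l : ℕ => ∫ b in Set.Ioo (0:ℝ) (π/2), ‖F l b‖) := by
    apply Summable.of_nonneg_of_le
      (fun l => MeasureTheory.integral_nonneg (fun b => norm_nonneg _))
      (fun l => ?_)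
      (((summable_abs_sqc.mul_left cst).mul_right (Ib 0)))
    rw [hnorm l]
    have h1 : Real.sin a ^ (2*(l:ℝ)) ≤ 1 :=
      Real.rpow_le_one hsa.le hsa1.le (by positivity)
    calc |sqc l| * Real.sin a ^ (2*(l:ℝ)) * cst * Ib l
        ≤ |sqc l| * 1 * cst * Ib 0 := by
          apply mul_le_mul _ (hIb_mono l) (hIb_nonneg l) (by positivity)
          apply mul_le_mul_of_nonneg_right _ hcst_pos.le
          apply mul_le_mul_of_nonneg_left h1 (abs_nonneg _)
      _ = cst * |sqc l| * Ib 0 := by ring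
  -- pointwise sum identity
  have hpt : ∀ b ∈ Set.Ioo (0:ℝ) (π/2),
      (∑' l, F l b) = Real.sqrt (1 - Real.sin a ^ 2 * Real.sin b ^ 2) *
          Real.sin a ^ (n : ℝ) * Real.cos a ^ ((J : ℝ) - 1) *
          Real.cos b ^ ((K : ℝ) - 1) * Real.sin b ^ ((J : ℝ) - 1) := by
    intro b hb
    obtain ⟨hsb, hsb1, hcb⟩ := mem_trig hb
    set x : ℝ := Real.sin a ^ 2 * Real.sin b ^ 2 with hx
    have h0x : 0 ≤ x := by positivity
    have h1x : x < 1 := by nlinarith [Real.sin_sq_le_one b]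
    set M : ℝ := cst * (Real.cos b ^ ((K:ℝ)-1) * Real.sin b ^ ((J:ℝ)-1)) with hM
    have hHS := (hasSum_sqrt_one_sub h0x h1x).mul_right M
    have hterm : ∀ l : ℕ, sqc l * x ^ l * M = F l b := by
      intro l
      simp only [hF, hM, hcst, hx]
      have e1 : (Real.sin a ^ 2 * Real.sin b ^ 2) ^ l
          = Real.sin a ^ (2*(l:ℝ)) * Real.sin b ^ (2*(l:ℝ)) := by
        rw [mul_pow, ← pow_mul, ← pow_mul]
        rw [← Real.rpow_natCast (Real.sin a) (2*l), ← Real.rpow_natCast (Real.sin b) (2*l)]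
        push_cast
        ring_nf
      rw [e1]
      have e2 : Real.sin b ^ (2*(l:ℝ)) * Real.sin b ^ ((J:ℝ)-1)
          = Real.sin b ^ (2*(l:ℝ) + ((J:ℝ)-1)) := by
        rw [← Real.rpow_add hsb]
      rw [← e2]
      ring
    have hHS' : HasSum (fun l => F l b)
        (Real.sqrt (1 - x) * M) := by
      have hfe : (fun l : ℕ => sqc l * x ^ l * M) = fun l => F l b := funext hterm
      exact hfe ▸ hHS
    rw [hHS'.tsum_eq, hM, hcst, hx]
    ring
  -- interchange
  have hkey := MeasureTheory.integral_tsum_of_summable_integral_norm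
    (F := F) (μ := volume.restrict (Set.Ioo (0:ℝ) (π/2))) hFint hsum
  rw [MeasureTheory.setIntegral_congr_fun measurableSet_Ioo
    (g := fun b => ∑' l, F l b) (fun b hb => (hpt b hb).symm), ← hkey]
  apply tsum_congr
  intro l
  have e3 : Real.sin a ^ (2*(l:ℝ)) * Real.sin a ^ (n:ℝ)
      = Real.sin a ^ (2*(l:ℝ) + (n:ℝ)) := by
    rw [← Real.rpow_add hsa]
  simp only [hF]
  rw [MeasureTheory.integral_const_mul, ← e3, hcst]
  ring

end Main

lemma J0_not_integrable {n : ℕ} (hn : 1 ≤ n) {a : ℝ} (ha : a ∈ Set.Ioo (0:ℝ) (π/2)) :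
    ¬ IntegrableOn (fun b => Real.sqrt (1 - Real.sin a ^ 2 * Real.sin b ^ 2) *
        Real.sin a ^ (n:ℝ) * Real.cos a ^ ((0:ℝ) - 1) *
        Real.cos b ^ ((n:ℝ) - 1) * Real.sin b ^ ((0:ℝ) - 1)) (Set.Ioo 0 (π/2)) := by
  obtain ⟨hsa, hsa1, hca⟩ := mem_trig ha
  have hn' : (1:ℝ) ≤ (n:ℝ) := by exact_mod_cast hn
  intro hInt
  have hpi : (1:ℝ) < π/2 := by nlinarith [Real.pi_gt_three]
  have hsub : Set.Ioo (0:ℝ) 1 ⊆ Set.Ioo 0 (π/2) :=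
    Set.Ioo_subset_Ioo_right hpi.le
  have hInt1 := hInt.mono_set hsub
  have hc1 : 0 < Real.cos 1 :=
    Real.cos_pos_of_mem_Ioo ⟨by nlinarith [Real.pi_gt_three], hpi⟩
  set A : ℝ := Real.sin a ^ (n:ℝ) * Real.cos a ^ ((0:ℝ)-1) with hA
  have hApos : 0 < A :=
    mul_pos (Real.rpow_pos_of_pos hsa _) (Real.rpow_pos_of_pos hca _)
  set C₀ : ℝ := Real.cos a * A * Real.cos 1 ^ ((n:ℝ)-1) with hC0
  have hC0pos : 0 < C₀ :=
    mul_pos (mul_pos hca hApos) (Real.rpow_pos_of_pos hc1 _)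
  have hcomp : IntegrableOn (fun b => C₀ * b⁻¹) (Set.Ioo (0:ℝ) 1) := by
    apply MeasureTheory.Integrable.mono hInt1
      ((measurable_const.mul measurable_inv).aestronglyMeasurable)
    filter_upwards [MeasureTheory.ae_restrict_mem measurableSet_Ioo] with b hb
    have hbm : b ∈ Set.Ioo (0:ℝ) (π/2) := hsub hb
    obtain ⟨hsb, hsb1, hcb⟩ := mem_trig hbm
    have hb0 : 0 < b := hb.1
    have hb1 : b < 1 := hb.2
    have hX : (0:ℝ) ≤ 1 - Real.sin a ^ 2 * Real.sin b ^ 2 := by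
      nlinarith [Real.sin_sq_le_one b]
    have h1 : Real.cos a ≤ Real.sqrt (1 - Real.sin a ^ 2 * Real.sin b ^ 2) := by
      rw [show Real.cos a = Real.sqrt (Real.cos a ^ 2) from (Real.sqrt_sq hca.le).symm]
      apply Real.sqrt_le_sqrt
      nlinarith [Real.sin_sq_add_cos_sq a, Real.sin_sq_le_one b]
    have h2 : Real.cos 1 ^ ((n:ℝ)-1) ≤ Real.cos b ^ ((n:ℝ)-1) := by
      apply Real.rpow_le_rpow hc1.le
        (Real.cos_le_cos_of_nonneg_of_le_pi hb0.le (by nlinarith [Real.pi_gt_three]) hb1.le)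
        (by linarith)
    have h3 : b⁻¹ ≤ (Real.sin b)⁻¹ := by
      apply inv_anti₀ hsb (Real.sin_lt hb0).le
    have hsbinv : Real.sin b ^ ((0:ℝ)-1) = (Real.sin b)⁻¹ := by
      rw [show (0:ℝ)-1 = -1 by norm_num, Real.rpow_neg_one]
    have hfb : Real.sqrt (1 - Real.sin a ^ 2 * Real.sin b ^ 2) *
        Real.sin a ^ (n:ℝ) * Real.cos a ^ ((0:ℝ) - 1) *
        Real.cos b ^ ((n:ℝ) - 1) * Real.sin b ^ ((0:ℝ) - 1)
        = (Real.sqrt (1 - Real.sin a ^ 2 * Real.sin b ^ 2) * A) *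
          (Real.cos b ^ ((n:ℝ)-1) * (Real.sin b)⁻¹) := by
      rw [hA, hsbinv]; ring
    have hkey : C₀ * b⁻¹ ≤ (Real.sqrt (1 - Real.sin a ^ 2 * Real.sin b ^ 2) * A) *
        (Real.cos b ^ ((n:ℝ)-1) * (Real.sin b)⁻¹) := by
      have e0 : C₀ * b⁻¹ = (Real.cos a * A) * (Real.cos 1 ^ ((n:ℝ)-1) * b⁻¹) := by
        rw [hC0]; ring
      rw [e0]
      apply mul_le_mul (mul_le_mul_of_nonneg_right h1 hApos.le)
        (mul_le_mul h2 h3 (by positivity) (Real.rpow_nonneg hcb.le _))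
        (by positivity)
        (mul_nonneg (Real.sqrt_nonneg _) hApos.le)
    show ‖C₀ * b⁻¹‖ ≤ _
    rw [Real.norm_of_nonneg (mul_pos hC0pos (inv_pos.2 hb0)).le, Real.norm_of_nonneg (by
      rw [hfb]; positivity)]
    rw [hfb]
    exact hkey
  have hinv : IntegrableOn (fun b : ℝ => b ^ (-1:ℝ)) (Set.Ioo (0:ℝ) 1) := by
    have h1 : IntegrableOn (fun b : ℝ => C₀⁻¹ * (C₀ * b⁻¹)) (Set.Ioo (0:ℝ) 1) :=
      hcomp.const_mul _
    refine h1.congr_fun (fun b _ => ?_) measurableSet_Ioo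
    rw [Real.rpow_neg_one]
    field_simp
  have := (intervalIntegral.integrableOn_Ioo_rpow_iff one_pos).1 hinv
  norm_num at this

theorem angular_integral_3F2 (n J K : ℕ) (hn : 1 ≤ n) (hK : K = n - J)
    (hJn : J ≤ n) (hK1 : 1 ≤ K) :
    (∫ a in Set.Ioo (0:ℝ) (π / 2), ∫ b in Set.Ioo (0:ℝ) (π / 2),
        Real.sqrt (1 - Real.sin a ^ 2 * Real.sin b ^ 2) *
          Real.sin a ^ (n : ℝ) * Real.cos a ^ ((J : ℝ) - 1) *
          Real.cos b ^ ((K : ℝ) - 1) * Real.sin b ^ ((J : ℝ) - 1)) =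
      (Real.Gamma (((n : ℝ) + 1) / 2) * Real.Gamma ((J : ℝ) / 2) ^ 2 *
          Real.Gamma ((K : ℝ) / 2) /
        (4 * Real.Gamma (((n : ℝ) + (J : ℝ) + 1) / 2) * Real.Gamma ((n : ℝ) / 2))) *
      ∑' l : ℕ,
        poch (((n : ℝ) + 1) / 2) l * poch ((J : ℝ) / 2) l * poch (-(1 / 2)) l /
          (poch (((n : ℝ) + (J : ℝ) + 1) / 2) l * poch ((n : ℝ) / 2) l * l.factorial) := by
  rcases Nat.eq_zero_or_pos J with hJ0 | hJ1
  · -- degenerate case J = 0 : both sides vanish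
    subst hJ0
    have hKn : K = n := by omega
    subst hKn
    simp only [Nat.cast_zero]
    rw [show Real.Gamma ((0:ℝ)/2) = 0 by norm_num [Real.Gamma_zero]]
    rw [show (0:ℝ)^2 = 0 by norm_num]
    simp only [mul_zero, zero_mul, zero_div]
    rw [MeasureTheory.setIntegral_congr_fun measurableSet_Ioo
      (g := fun _ => (0:ℝ)) (fun a ha => ?_)]
    · simp
    · exact MeasureTheory.integral_undef (J0_not_integrable hn ha)
  · -- main case J ≥ 1
    have hKJ : K + J = n := by omega
    have hJK : (J:ℝ) + (K:ℝ) = (n:ℝ) := by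
      have : ((K + J : ℕ) : ℝ) = (n:ℝ) := by exact_mod_cast congrArg (Nat.cast : ℕ → ℝ) hKJ
      push_cast at this
      linarith
    have hn' : (1:ℝ) ≤ (n:ℝ) := by exact_mod_cast hn
    have hJ1' : (1:ℝ) ≤ (J:ℝ) := by exact_mod_cast hJ1
    have hK1' : (1:ℝ) ≤ (K:ℝ) := by exact_mod_cast hK1
    have hpa : ∀ l : ℕ, (-1:ℝ) < 2*(l:ℝ) + (n:ℝ) := by
      intro l
      have := Nat.cast_nonneg (α := ℝ) l
      linarith
    have hqa : (-1:ℝ) < (J:ℝ)-1 := by linarith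
    have hpb : ∀ l : ℕ, (-1:ℝ) < 2*(l:ℝ) + ((J:ℝ)-1) := by
      intro l
      have := Nat.cast_nonneg (α := ℝ) l
      linarith
    have hqb : (-1:ℝ) < (K:ℝ)-1 := by linarith
    set Ib : ℕ → ℝ := fun l => ∫ b in Set.Ioo (0:ℝ) (π/2),
        Real.sin b ^ (2*(l:ℝ) + ((J:ℝ)-1)) * Real.cos b ^ ((K:ℝ)-1) with hIbd
    set Ia : ℕ → ℝ := fun l => ∫ a in Set.Ioo (0:ℝ) (π/2),
        Real.sin a ^ (2*(l:ℝ) + (n:ℝ)) * Real.cos a ^ ((J:ℝ)-1) with hIad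
    set G : ℕ → ℝ → ℝ := fun l a => (sqc l * Ib l) *
        (Real.sin a ^ (2*(l:ℝ) + (n:ℝ)) * Real.cos a ^ ((J:ℝ)-1)) with hG
    have hGint : ∀ l : ℕ, IntegrableOn (G l) (Set.Ioo (0:ℝ) (π/2)) := by
      intro l
      exact ((trigBeta _ _ (hpa l) hqa).1).const_mul _
    have hIb_nonneg : ∀ l, 0 ≤ Ib l := by
      intro l
      apply MeasureTheory.setIntegral_nonneg measurableSet_Ioo
      intro b hb
      obtain ⟨hsb, _, hcb⟩ := mem_trig hb
      positivity
    have hIa_nonneg : ∀ l, 0 ≤ Ia l := by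
      intro l
      apply MeasureTheory.setIntegral_nonneg measurableSet_Ioo
      intro b hb
      obtain ⟨hsb, _, hcb⟩ := mem_trig hb
      positivity
    have hIb_mono : ∀ l, Ib l ≤ Ib 0 := by
      intro l
      apply MeasureTheory.setIntegral_mono_on (trigBeta _ _ (hpb l) hqb).1
        (trigBeta _ _ (hpb 0) hqb).1 measurableSet_Ioo
      intro b hb
      obtain ⟨hsb, hsb1, hcb⟩ := mem_trig hb
      apply mul_le_mul_of_nonneg_right _ (Real.rpow_nonneg hcb.le _)
      apply Real.rpow_le_rpow_of_exponent_ge hsb hsb1.le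
      have := Nat.cast_nonneg (α := ℝ) l
      push_cast
      linarith
    have hIa_mono : ∀ l, Ia l ≤ Ia 0 := by
      intro l
      apply MeasureTheory.setIntegral_mono_on (trigBeta _ _ (hpa l) hqa).1
        (trigBeta _ _ (hpa 0) hqa).1 measurableSet_Ioo
      intro b hb
      obtain ⟨hsb, hsb1, hcb⟩ := mem_trig hb
      apply mul_le_mul_of_nonneg_right _ (Real.rpow_nonneg hcb.le _)
      apply Real.rpow_le_rpow_of_exponent_ge hsb hsb1.le
      have := Nat.cast_nonneg (α := ℝ) l
      push_cast
      linarith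
    have hGnorm : ∀ l : ℕ, (∫ a in Set.Ioo (0:ℝ) (π/2), ‖G l a‖)
        = |sqc l * Ib l| * Ia l := by
      intro l
      have hcg : ∀ a ∈ Set.Ioo (0:ℝ) (π/2), ‖G l a‖
          = |sqc l * Ib l| *
            (Real.sin a ^ (2*(l:ℝ) + (n:ℝ)) * Real.cos a ^ ((J:ℝ)-1)) := by
        intro a ha
        obtain ⟨hsa, _, hca⟩ := mem_trig ha
        simp only [hG, Real.norm_eq_abs, abs_mul]
        rw [abs_of_pos (Real.rpow_pos_of_pos hsa _), abs_of_pos (Real.rpow_pos_of_pos hca _)]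
      rw [MeasureTheory.setIntegral_congr_fun measurableSet_Ioo hcg,
        MeasureTheory.integral_const_mul]
    have hGsum : Summable (fun l : ℕ => ∫ a in Set.Ioo (0:ℝ) (π/2), ‖G l a‖) := by
      apply Summable.of_nonneg_of_le
        (fun l => MeasureTheory.integral_nonneg (fun b => norm_nonneg _))
        (fun l => ?_)
        (((summable_abs_sqc.mul_right (Ib 0)).mul_right (Ia 0)))
      rw [hGnorm l, abs_mul, abs_of_nonneg (hIb_nonneg l)]
      calc |sqc l| * Ib l * Ia l ≤ |sqc l| * Ib 0 * Ia 0 := by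
            apply mul_le_mul (mul_le_mul_of_nonneg_left (hIb_mono l) (abs_nonneg _))
              (hIa_mono l) (hIa_nonneg l)
              (mul_nonneg (abs_nonneg _) (hIb_nonneg 0))
        _ = |sqc l| * Ib 0 * Ia 0 := rfl
    have hkey := MeasureTheory.integral_tsum_of_summable_integral_norm
      (F := G) (μ := volume.restrict (Set.Ioo (0:ℝ) (π/2))) hGint hGsum
    rw [MeasureTheory.setIntegral_congr_fun measurableSet_Ioo
      (g := fun a => ∑' l, G l a) (fun a ha => inner_step hn hJ1 hK1 ha), ← hkey]
    -- compute the values of the one-dimensional integrals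
    have hJ2 : (0:ℝ) < (J:ℝ)/2 := by linarith
    have hn2 : (0:ℝ) < (n:ℝ)/2 := by linarith
    have hn12 : (0:ℝ) < ((n:ℝ)+1)/2 := by linarith
    have hnJ2 : (0:ℝ) < ((n:ℝ)+(J:ℝ)+1)/2 := by linarith
    have hIb_val : ∀ l : ℕ, Ib l = Real.Gamma ((l:ℝ)+(J:ℝ)/2) * Real.Gamma ((K:ℝ)/2)
        / (2 * Real.Gamma ((l:ℝ)+(n:ℝ)/2)) := by
      intro l
      have h := (trigBeta _ _ (hpb l) hqb).2
      rw [show (2*(l:ℝ) + ((J:ℝ)-1) + 1)/2 = (l:ℝ)+(J:ℝ)/2 by ring,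
        show ((K:ℝ)-1+1)/2 = (K:ℝ)/2 by ring,
        show (l:ℝ)+(J:ℝ)/2 + (K:ℝ)/2 = (l:ℝ)+(n:ℝ)/2 by rw [← hJK]; ring] at h
      exact h
    have hIa_val : ∀ l : ℕ, Ia l = Real.Gamma ((l:ℝ)+((n:ℝ)+1)/2) * Real.Gamma ((J:ℝ)/2)
        / (2 * Real.Gamma ((l:ℝ)+((n:ℝ)+(J:ℝ)+1)/2)) := by
      intro l
      have h := (trigBeta _ _ (hpa l) hqa).2
      rw [show (2*(l:ℝ) + (n:ℝ) + 1)/2 = (l:ℝ)+((n:ℝ)+1)/2 by ring,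
        show ((J:ℝ)-1+1)/2 = (J:ℝ)/2 by ring,
        show (l:ℝ)+((n:ℝ)+1)/2 + (J:ℝ)/2 = (l:ℝ)+((n:ℝ)+(J:ℝ)+1)/2 by ring] at h
      exact h
    rw [← tsum_mul_left]
    apply tsum_congr
    intro l
    have hGval : ∫ a in Set.Ioo (0:ℝ) (π/2), G l a = (sqc l * Ib l) * Ia l := by
      simp only [hG]
      rw [MeasureTheory.integral_const_mul]
    rw [hGval, hIb_val l, hIa_val l,
      Gamma_nat_add hJ2 l, Gamma_nat_add hn2 l, Gamma_nat_add hn12 l, Gamma_nat_add hnJ2 l]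
    simp only [sqc]
    have hfac : (l.factorial : ℝ) ≠ 0 := Nat.cast_ne_zero.2 l.factorial_ne_zero
    have hne1 : Real.Gamma ((n:ℝ)/2) ≠ 0 := (Real.Gamma_pos_of_pos hn2).ne'
    have hne2 : Real.Gamma (((n:ℝ)+(J:ℝ)+1)/2) ≠ 0 := (Real.Gamma_pos_of_pos hnJ2).ne'
    have hne3 : poch ((n:ℝ)/2) l ≠ 0 := (poch_pos hn2 l).ne'
    have hne4 : poch (((n:ℝ)+(J:ℝ)+1)/2) l ≠ 0 := (poch_pos hnJ2 l).ne'
    field_simp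
    ring
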